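/- (Recurrence for OSSCM) Let G=(U,V,E) be a bipartite graph with a fixed linear ordering π_U of U, and let E = E₁ ∪ E₂ ∪ … ∪ E_h be a partition of E into pairwise disjoint color classes. Then for every S ⊆ V and every integer k with 1 ≤ k ≤ |S|−1, OPT_Σ(S) = min over subsets W ⊆ S with |W| = k of (OPT_Σ(W) + OPT_Σ(S∖W) + Σ_{i=1}^{h} γ_i(π_U, W, S∖W)), where γ_i(π_U, W, S∖W) is the number of pairs of edges ((u₁,v₁),(u₂,v₂)) ∈ (E_i ∩ E(W)) × (E_i ∩ E(S∖W)) with π_U(u₂) < π_U(u₁). -/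

import Mathlib

open Finset

/-- Two edges `e₁ = (u₁, v₁)` and `e₂ = (u₂, v₂)` of a bipartite graph
`G = (U, V, E ⊆ U × V)` cross in the 2-level drawing `(πU, πV)`:
`u₁ ≠ u₂`, `v₁ ≠ v₂`, and either `πU u₁ < πU u₂` and `πV v₂ < πV v₁`, or
`πU u₂ < πU u₁` and `πV v₁ < πV v₂`. -/
def Cross {U V : Type*} [Fintype U] [Fintype V]
    (πU : U ≃ Fin (Fintype.card U)) (πV : V ≃ Fin (Fintype.card V))
    (e₁ e₂ : U × V) : Prop :=
  e₁.1 ≠ e₂.1 ∧ e₁.2 ≠ e₂.2 ∧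
    ((πU e₁.1 < πU e₂.1 ∧ πV e₂.2 < πV e₁.2) ∨
     (πU e₂.1 < πU e₁.1 ∧ πV e₁.2 < πV e₂.2))

/-- `E(W)`: the set of edges of `E` whose endpoint in the free layer lies in `W`. -/
noncomputable def edgesIn {U V : Type*} (E : Finset (U × V)) (W : Finset V) :
    Finset (U × V) := by
  classical exact E.filter fun e => e.2 ∈ W

/-- `cr_S(πU, πV)`: the number of distinct unordered pairs of edges of `S` that
cross in `(πU, πV)`.  Since two crossing edges have distinct `U`-endpoints, each
unordered crossing pair is counted exactly once by counting the ordered pairs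
`(e₁, e₂)` that cross and satisfy `πU e₁.1 < πU e₂.1`. -/
noncomputable def cr {U V : Type*} [Fintype U] [Fintype V]
    (πU : U ≃ Fin (Fintype.card U)) (πV : V ≃ Fin (Fintype.card V))
    (S : Finset (U × V)) : ℕ := by
  classical exact
    ((S ×ˢ S).filter fun p => Cross πU πV p.1 p.2 ∧ πU p.1.1 < πU p.2.1).card

/-- `V₁ ≺_{πV} V₂`: every vertex of `V₁` precedes every vertex of `V₂` in `πV`. -/
def Precedes {V : Type*} [Fintype V] (πV : V ≃ Fin (Fintype.card V))
    (V₁ V₂ : Finset V) : Prop :=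
  ∀ v₁ ∈ V₁, ∀ v₂ ∈ V₂, πV v₁ < πV v₂

open scoped Classical in
/-- `OPT_Σ(S)` for OSSCM: the minimum over all linear orderings `πV` of `V` of
`Σ_{i=1}^{h} cr_{E_i ∩ E(S)}(πU, πV)`, where `Ecl i` is the `i`-th color class. -/
noncomputable def OPTsigma {U V : Type*} [Fintype U] [Fintype V] {h : ℕ}
    (E : Finset (U × V)) (Ecl : Fin h → Finset (U × V))
    (πU : U ≃ Fin (Fintype.card U)) (S : Finset V) : ℕ :=
  sInf {c | ∃ πV : V ≃ Fin (Fintype.card V),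
    c = ∑ i : Fin h, cr πU πV (Ecl i ∩ edgesIn E S)}

open scoped Classical in
/-- `γ_i(πU, V₁, V₂)`: the number of pairs of edges
`((u₁, v₁), (u₂, v₂)) ∈ (E_i ∩ E(V₁)) × (E_i ∩ E(V₂))` with `πU u₂ < πU u₁`. -/
noncomputable def gammaCl {U V : Type*} [Fintype U] {h : ℕ}
    (E : Finset (U × V)) (Ecl : Fin h → Finset (U × V)) (i : Fin h)
    (πU : U ≃ Fin (Fintype.card U)) (V₁ V₂ : Finset V) : ℕ :=
  (((Ecl i ∩ edgesIn E V₁) ×ˢ (Ecl i ∩ edgesIn E V₂)).filter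
    fun p => πU p.2.1 < πU p.1.1).card

section aux
set_option linter.unusedSectionVars false
variable {U V : Type*} [Fintype U] [Fintype V]

lemma mem_edgesIn {E : Finset (U × V)} {W : Finset V} {e : U × V} :
    e ∈ edgesIn E W ↔ e ∈ E ∧ e.2 ∈ W := by
  classical
  unfold edgesIn
  simp

open scoped Classical in
lemma cr_eq (πU : U ≃ Fin (Fintype.card U)) (πV : V ≃ Fin (Fintype.card V))
    (S : Finset (U × V)) :
    cr πU πV S =
      ((S ×ˢ S).filter fun p => Cross πU πV p.1 p.2 ∧ πU p.1.1 < πU p.2.1).card := by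
  unfold cr
  congr

open scoped Classical in
lemma gammaCl_eq {h : ℕ} (E : Finset (U × V)) (Ecl : Fin h → Finset (U × V)) (i : Fin h)
    (πU : U ≃ Fin (Fintype.card U)) (V₁ V₂ : Finset V) :
    gammaCl E Ecl i πU V₁ V₂ =
      (((Ecl i ∩ edgesIn E V₁) ×ˢ (Ecl i ∩ edgesIn E V₂)).filter
        fun p => πU p.2.1 < πU p.1.1).card := by
  unfold gammaCl
  congr

/-- Invariance of `cr` under orderings that agree relatively on all second
coordinates of edges of `T`. -/
lemma cr_congr (πU : U ≃ Fin (Fintype.card U)) (πV πV' : V ≃ Fin (Fintype.card V))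
    (T : Finset (U × V))
    (hrel : ∀ e ∈ T, ∀ e' ∈ T, (πV e.2 < πV e'.2 ↔ πV' e.2 < πV' e'.2)) :
    cr πU πV T = cr πU πV' T := by
  classical
  rw [cr_eq, cr_eq]
  congr 1
  apply Finset.filter_congr
  intro p hp
  rw [Finset.mem_product] at hp
  unfold Cross
  rw [hrel p.2 hp.2 p.1 hp.1, hrel p.1 hp.1 p.2 hp.2]

open scoped Classical in
lemma cr_split {h : ℕ} (E : Finset (U × V)) (Ecl : Fin h → Finset (U × V)) (i : Fin h)
    (πU : U ≃ Fin (Fintype.card U)) (πV : V ≃ Fin (Fintype.card V))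
    (V₁ V₂ : Finset V) (hd : Disjoint V₁ V₂) (hprec : Precedes πV V₁ V₂) :
    cr πU πV (Ecl i ∩ edgesIn E (V₁ ∪ V₂)) =
      cr πU πV (Ecl i ∩ edgesIn E V₁) + cr πU πV (Ecl i ∩ edgesIn E V₂) +
        gammaCl E Ecl i πU V₁ V₂ := by
  classical
  set A := Ecl i ∩ edgesIn E V₁ with hA
  set B := Ecl i ∩ edgesIn E V₂ with hB
  have hsndA : ∀ e ∈ A, e.2 ∈ V₁ := by
    intro e he; rw [hA, Finset.mem_inter, mem_edgesIn] at he; exact he.2.2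
  have hsndB : ∀ e ∈ B, e.2 ∈ V₂ := by
    intro e he; rw [hB, Finset.mem_inter, mem_edgesIn] at he; exact he.2.2
  have hAB : Disjoint A B := by
    rw [Finset.disjoint_left]
    intro e heA heB
    exact Finset.disjoint_left.mp hd (hsndA e heA) (hsndB e heB)
  have hUnion : Ecl i ∩ edgesIn E (V₁ ∪ V₂) = A ∪ B := by
    ext e
    simp only [hA, hB, Finset.mem_inter, Finset.mem_union, mem_edgesIn]
    tauto
  rw [hUnion, cr_eq, cr_eq, cr_eq, gammaCl_eq, ← hA, ← hB]
  set P : (U × V) × (U × V) → Prop :=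
    fun p => Cross πU πV p.1 p.2 ∧ πU p.1.1 < πU p.2.1 with hP
  -- the A×B part of the filter is empty
  have hABempty : ∀ p ∈ A ×ˢ B, ¬ P p := by
    rintro p hp ⟨hc, hlt⟩
    rw [Finset.mem_product] at hp
    have hv : πV p.1.2 < πV p.2.2 := hprec _ (hsndA _ hp.1) _ (hsndB _ hp.2)
    rcases hc.2.2 with ⟨_, h2⟩ | ⟨h1, _⟩
    · exact absurd hv (lt_asymm h2)
    · exact absurd hlt (lt_asymm h1)
  have hfilter : ((A ∪ B) ×ˢ (A ∪ B)).filter P =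
      ((A ×ˢ A).filter P ∪ (B ×ˢ B).filter P) ∪ (B ×ˢ A).filter P := by
    ext p
    simp only [Finset.mem_filter, Finset.mem_union, Finset.mem_product]
    constructor
    · rintro ⟨⟨h1 | h1, h2 | h2⟩, hPp⟩
      · exact Or.inl (Or.inl ⟨⟨h1, h2⟩, hPp⟩)
      · exact absurd hPp (hABempty p (Finset.mem_product.mpr ⟨h1, h2⟩))
      · exact Or.inr ⟨⟨h1, h2⟩, hPp⟩
      · exact Or.inl (Or.inr ⟨⟨h1, h2⟩, hPp⟩)
    · rintro ((⟨⟨h1, h2⟩, hPp⟩ | ⟨⟨h1, h2⟩, hPp⟩) | ⟨⟨h1, h2⟩, hPp⟩)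
      · exact ⟨⟨Or.inl h1, Or.inl h2⟩, hPp⟩
      · exact ⟨⟨Or.inr h1, Or.inr h2⟩, hPp⟩
      · exact ⟨⟨Or.inr h1, Or.inl h2⟩, hPp⟩
  rw [hfilter]
  have hd1 : Disjoint ((A ×ˢ A).filter P) ((B ×ˢ B).filter P) := by
    rw [Finset.disjoint_left]
    intro p hp hq
    rw [Finset.mem_filter, Finset.mem_product] at hp hq
    exact Finset.disjoint_left.mp hAB hp.1.1 hq.1.1
  have hd2 : Disjoint (((A ×ˢ A).filter P ∪ (B ×ˢ B).filter P)) ((B ×ˢ A).filter P) := by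
    rw [Finset.disjoint_left]
    intro p hp hq
    rw [Finset.mem_filter, Finset.mem_product] at hq
    rw [Finset.mem_union, Finset.mem_filter, Finset.mem_filter,
      Finset.mem_product, Finset.mem_product] at hp
    rcases hp with ⟨⟨h1, _⟩, _⟩ | ⟨⟨_, h2⟩, _⟩
    · exact Finset.disjoint_left.mp hAB h1 hq.1.1
    · exact Finset.disjoint_left.mp hAB hq.1.2 h2
  rw [Finset.card_union_of_disjoint hd2, Finset.card_union_of_disjoint hd1]
  -- now identify the BA part with gamma
  have hBA : ((B ×ˢ A).filter P).card =
      ((A ×ˢ B).filter fun p => πU p.2.1 < πU p.1.1).card := by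
    apply Finset.card_nbij' (i := Prod.swap) (j := Prod.swap)
    · intro p hp
      rw [Finset.mem_coe, Finset.mem_filter, Finset.mem_product] at hp
      rw [Finset.mem_coe, Finset.mem_filter, Finset.mem_product]
      exact ⟨⟨hp.1.2, hp.1.1⟩, hp.2.2⟩
    · intro q hq
      rw [Finset.mem_coe, Finset.mem_filter, Finset.mem_product] at hq
      rw [Finset.mem_coe, Finset.mem_filter, Finset.mem_product]
      refine ⟨⟨hq.1.2, hq.1.1⟩, ?_, hq.2⟩
      refine ⟨?_, ?_, Or.inl ⟨hq.2, hprec _ (hsndA _ hq.1.1) _ (hsndB _ hq.1.2)⟩⟩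
      · exact fun heq => lt_irrefl _ (heq ▸ hq.2)
      · exact fun heq => Finset.disjoint_left.mp hd
          (hsndA _ hq.1.1) (heq ▸ hsndB _ hq.1.2)
    · intro p _; rfl
    · intro q _; rfl
  rw [hBA]
end aux

section aux2
set_option linter.unusedSectionVars false
variable {U V : Type*} [Fintype U] [Fintype V]

open scoped Classical in
lemma exists_prefix (πV : V ≃ Fin (Fintype.card V)) (S : Finset V) :
    ∀ k, k ≤ S.card → ∃ W, W ⊆ S ∧ W.card = k ∧
      ∀ w ∈ W, ∀ v ∈ S \ W, πV w < πV v := by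
  classical
  intro k
  induction k with
  | zero => exact fun _ => ⟨∅, Finset.empty_subset _, rfl, by simp⟩
  | succ k ih =>
    intro hk
    obtain ⟨W, hWS, hcard, hmin⟩ := ih (Nat.le_of_succ_le hk)
    have hne : (S \ W).Nonempty := by
      rw [← Finset.card_pos, Finset.card_sdiff_of_subset hWS, hcard]
      omega
    obtain ⟨v₀, hv₀, hmin₀⟩ := Finset.exists_min_image (S \ W) (fun v => πV v) hne
    have hv₀W : v₀ ∉ W := (Finset.mem_sdiff.mp hv₀).2
    refine ⟨insert v₀ W, ?_, ?_, ?_⟩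
    · exact Finset.insert_subset (Finset.mem_sdiff.mp hv₀).1 hWS
    · rw [Finset.card_insert_of_notMem hv₀W, hcard]
    · intro w hw v hv
      rw [Finset.mem_sdiff, Finset.mem_insert] at hv
      push_neg at hv
      have hvSW : v ∈ S \ W := Finset.mem_sdiff.mpr ⟨hv.1, hv.2.2⟩
      rcases Finset.mem_insert.mp hw with rfl | hwW
      · exact lt_of_le_of_ne (hmin₀ v hvSW) (fun heq => hv.2.1 (πV.injective heq).symm)
      · exact hmin w hwW v hvSW

open scoped Classical in
lemma OPTsigma_set_nonempty {h : ℕ} (E : Finset (U × V)) (Ecl : Fin h → Finset (U × V))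
    (πU : U ≃ Fin (Fintype.card U)) (S : Finset V) :
    {c | ∃ πV : V ≃ Fin (Fintype.card V),
      c = ∑ i : Fin h, cr πU πV (Ecl i ∩ edgesIn E S)}.Nonempty :=
  ⟨_, Fintype.equivFin V, rfl⟩

open scoped Classical in
lemma OPTsigma_attained {h : ℕ} (E : Finset (U × V)) (Ecl : Fin h → Finset (U × V))
    (πU : U ≃ Fin (Fintype.card U)) (S : Finset V) :
    ∃ πV : V ≃ Fin (Fintype.card V),
      OPTsigma E Ecl πU S = ∑ i : Fin h, cr πU πV (Ecl i ∩ edgesIn E S) :=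
  Nat.sInf_mem (OPTsigma_set_nonempty E Ecl πU S)

open scoped Classical in
lemma OPTsigma_le {h : ℕ} (E : Finset (U × V)) (Ecl : Fin h → Finset (U × V))
    (πU : U ≃ Fin (Fintype.card U)) (S : Finset V)
    (πV : V ≃ Fin (Fintype.card V)) :
    OPTsigma E Ecl πU S ≤ ∑ i : Fin h, cr πU πV (Ecl i ∩ edgesIn E S) :=
  Nat.sInf_le ⟨πV, rfl⟩

end aux2

open scoped Classical in
/-- recurrence for OSSCM: if `E = E₁ ∪ ⋯ ∪ E_h` is a partition of
`E` into pairwise disjoint color classes, then for every `S ⊆ V` and every `k`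
with `1 ≤ k ≤ |S| − 1`,
`OPT_Σ(S) = min_{W ⊆ S, |W| = k} (OPT_Σ(W) + OPT_Σ(S \ W) + Σ_i γ_i(πU, W, S \ W))`. -/
theorem OPTsigma_dp_recurrence {U V : Type*} [Fintype U] [Fintype V] {h : ℕ}
    (E : Finset (U × V)) (Ecl : Fin h → Finset (U × V))
    (hcover : E = Finset.univ.biUnion Ecl)
    (hdisj : ∀ i j : Fin h, i ≠ j → Disjoint (Ecl i) (Ecl j))
    (πU : U ≃ Fin (Fintype.card U))
    (S : Finset V) (k : ℕ) (hk₁ : 1 ≤ k) (hk₂ : k ≤ S.card - 1) :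
    OPTsigma E Ecl πU S =
      sInf {c | ∃ W ⊆ S, W.card = k ∧
        c = OPTsigma E Ecl πU W + OPTsigma E Ecl πU (S \ W) +
              ∑ i : Fin h, gammaCl E Ecl i πU W (S \ W)} := by
  classical
  have hkS : k ≤ S.card := le_trans hk₂ (Nat.sub_le _ _)
  apply le_antisymm
  · -- OPT(S) ≤ sInf RHS
    have hne : {c | ∃ W ⊆ S, W.card = k ∧
        c = OPTsigma E Ecl πU W + OPTsigma E Ecl πU (S \ W) +
              ∑ i : Fin h, gammaCl E Ecl i πU W (S \ W)}.Nonempty := by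
      obtain ⟨W, hWS, hWcard⟩ := Finset.exists_subset_card_eq hkS
      exact ⟨_, W, hWS, hWcard, rfl⟩
    refine le_csInf hne ?_
    rintro c ⟨W, hWS, hWcard, rfl⟩
    obtain ⟨π₁, h₁⟩ := OPTsigma_attained E Ecl πU W
    obtain ⟨π₂, h₂⟩ := OPTsigma_attained E Ecl πU (S \ W)
    set W₂ := S \ W with hW₂def
    have hdisjW : Disjoint W W₂ := Finset.disjoint_sdiff
    have hexists : ∃ πV : V ≃ Fin (Fintype.card V), Precedes πV W W₂ ∧
        (∀ v ∈ W, ∀ v' ∈ W, (πV v < πV v' ↔ π₁ v < π₁ v')) ∧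
        (∀ v ∈ W₂, ∀ v' ∈ W₂, (πV v < πV v' ↔ π₂ v < π₂ v')) := by
      set key : V → ℕ ×ₗ Fin (Fintype.card V) := fun v =>
        toLex (if v ∈ W then 0 else if v ∈ W₂ then 1 else 2,
               if v ∈ W then π₁ v else π₂ v) with hkey
      have keyinj : Function.Injective key := by
        intro a b hab
        have hab' := toLex.injective hab
        have h1 := congrArg Prod.fst hab'
        have h2 := congrArg Prod.snd hab'
        by_cases haW : a ∈ W <;> by_cases hbW : b ∈ W <;>
          simp only [haW, hbW, if_true, if_false] at h1 h2
        · exact π₁.injective h2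
        · split_ifs at h1 <;> omega
        · split_ifs at h1 <;> omega
        · exact π₂.injective h2
      letI : LinearOrder V := LinearOrder.lift' key keyinj
      let e : V ≃o Fin (Fintype.card V) := (monoEquivOfFin V rfl).symm
      refine ⟨e.toEquiv, ?_, ?_, ?_⟩
      · intro v₁ hv₁ v₂ hv₂
        have hv₂' : v₂ ∉ W := Finset.disjoint_right.mp hdisjW hv₂
        have : key v₁ < key v₂ := by
          rw [hkey]
          simp only
          rw [Prod.Lex.lt_iff]
          left
          simp [hv₁, hv₂', hv₂]
        exact e.lt_iff_lt.mpr this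
      · intro v hv v' hv'
        refine Iff.trans (Iff.trans e.lt_iff_lt (Iff.rfl : v < v' ↔ key v < key v')) ?_
        show key v < key v' ↔ _
        rw [hkey]
        simp only
        rw [Prod.Lex.lt_iff]
        simp [hv, hv']
      · intro v hv v' hv'
        have hv1 : v ∉ W := Finset.disjoint_right.mp hdisjW hv
        have hv1' : v' ∉ W := Finset.disjoint_right.mp hdisjW hv'
        refine Iff.trans (Iff.trans e.lt_iff_lt (Iff.rfl : v < v' ↔ key v < key v')) ?_
        show key v < key v' ↔ _
        rw [hkey]
        simp only
        rw [Prod.Lex.lt_iff]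
        simp [hv, hv', hv1, hv1']
    obtain ⟨πV, hPrec, hagree₁, hagree₂⟩ := hexists
    have hcr1 : ∀ i : Fin h, cr πU πV (Ecl i ∩ edgesIn E W) =
        cr πU π₁ (Ecl i ∩ edgesIn E W) := by
      intro i
      apply cr_congr
      intro a ha a' ha'
      exact hagree₁ _ (mem_edgesIn.mp (Finset.mem_inter.mp ha).2).2
        _ (mem_edgesIn.mp (Finset.mem_inter.mp ha').2).2
    have hcr2 : ∀ i : Fin h, cr πU πV (Ecl i ∩ edgesIn E W₂) =
        cr πU π₂ (Ecl i ∩ edgesIn E W₂) := by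
      intro i
      apply cr_congr
      intro a ha a' ha'
      exact hagree₂ _ (mem_edgesIn.mp (Finset.mem_inter.mp ha).2).2
        _ (mem_edgesIn.mp (Finset.mem_inter.mp ha').2).2
    have hS : W ∪ W₂ = S := by rw [hW₂def]; exact Finset.union_sdiff_of_subset hWS
    have hsum : ∑ i : Fin h, cr πU πV (Ecl i ∩ edgesIn E S) =
        OPTsigma E Ecl πU W + OPTsigma E Ecl πU W₂ +
          ∑ i : Fin h, gammaCl E Ecl i πU W W₂ := by
      rw [← hS]
      calc ∑ i : Fin h, cr πU πV (Ecl i ∩ edgesIn E (W ∪ W₂))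
          = ∑ i : Fin h, (cr πU πV (Ecl i ∩ edgesIn E W) +
              cr πU πV (Ecl i ∩ edgesIn E W₂) + gammaCl E Ecl i πU W W₂) :=
            Finset.sum_congr rfl fun i _ =>
              cr_split E Ecl i πU πV W W₂ hdisjW hPrec
        _ = (∑ i : Fin h, cr πU πV (Ecl i ∩ edgesIn E W)) +
              (∑ i : Fin h, cr πU πV (Ecl i ∩ edgesIn E W₂)) +
              ∑ i : Fin h, gammaCl E Ecl i πU W W₂ := by
            rw [Finset.sum_add_distrib, Finset.sum_add_distrib]
        _ = OPTsigma E Ecl πU W + OPTsigma E Ecl πU W₂ +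
              ∑ i : Fin h, gammaCl E Ecl i πU W W₂ := by
            rw [Finset.sum_congr rfl fun i _ => hcr1 i,
              Finset.sum_congr rfl fun i _ => hcr2 i, ← h₁, ← h₂]
    calc OPTsigma E Ecl πU S ≤ ∑ i : Fin h, cr πU πV (Ecl i ∩ edgesIn E S) :=
          OPTsigma_le E Ecl πU S πV
      _ = _ := hsum
  · -- sInf RHS ≤ OPT(S)
    obtain ⟨πV, hπV⟩ := OPTsigma_attained E Ecl πU S
    obtain ⟨W, hWS, hWcard, hpre⟩ := exists_prefix πV S k hkS
    have hPrec : Precedes πV W (S \ W) := hpre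
    have hdisjW : Disjoint W (S \ W) := Finset.disjoint_sdiff
    have hS : W ∪ (S \ W) = S := Finset.union_sdiff_of_subset hWS
    have hsplit : ∑ i : Fin h, cr πU πV (Ecl i ∩ edgesIn E S) =
        (∑ i : Fin h, cr πU πV (Ecl i ∩ edgesIn E W)) +
          (∑ i : Fin h, cr πU πV (Ecl i ∩ edgesIn E (S \ W))) +
          ∑ i : Fin h, gammaCl E Ecl i πU W (S \ W) := by
      have := calc ∑ i : Fin h, cr πU πV (Ecl i ∩ edgesIn E (W ∪ (S \ W)))
          = ∑ i : Fin h, (cr πU πV (Ecl i ∩ edgesIn E W) +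
              cr πU πV (Ecl i ∩ edgesIn E (S \ W)) + gammaCl E Ecl i πU W (S \ W)) :=
            Finset.sum_congr rfl fun i _ =>
              cr_split E Ecl i πU πV W (S \ W) hdisjW hPrec
        _ = (∑ i : Fin h, cr πU πV (Ecl i ∩ edgesIn E W)) +
              (∑ i : Fin h, cr πU πV (Ecl i ∩ edgesIn E (S \ W))) +
              ∑ i : Fin h, gammaCl E Ecl i πU W (S \ W) := by
            rw [Finset.sum_add_distrib, Finset.sum_add_distrib]
      rw [hS] at this
      exact this
    calc sInf {c | ∃ W ⊆ S, W.card = k ∧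
          c = OPTsigma E Ecl πU W + OPTsigma E Ecl πU (S \ W) +
                ∑ i : Fin h, gammaCl E Ecl i πU W (S \ W)}
        ≤ OPTsigma E Ecl πU W + OPTsigma E Ecl πU (S \ W) +
            ∑ i : Fin h, gammaCl E Ecl i πU W (S \ W) :=
          Nat.sInf_le ⟨W, hWS, hWcard, rfl⟩
      _ ≤ (∑ i : Fin h, cr πU πV (Ecl i ∩ edgesIn E W)) +
            (∑ i : Fin h, cr πU πV (Ecl i ∩ edgesIn E (S \ W))) +
            ∑ i : Fin h, gammaCl E Ecl i πU W (S \ W) :=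
          add_le_add (add_le_add (OPTsigma_le E Ecl πU W πV)
            (OPTsigma_le E Ecl πU (S \ W) πV)) le_rfl
      _ = ∑ i : Fin h, cr πU πV (Ecl i ∩ edgesIn E S) := hsplit.symm
      _ = OPTsigma E Ecl πU S := hπV.symm
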